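/- With a_n^α = n^γ log n, the expected number of edges E|E_n| = C(n,2)·P(X_1 X_2 > a_n) in the graph on n i.i.d. power-law vertices is asymptotically (γ/2) n^{2-γ} as n → ∞. -/

import Mathlib

open MeasureTheory Filter Real Set

noncomputable def paretoMeasure (α : ℝ) : Measure ℝ :=
  MeasureTheory.volume.withDensity
    (fun x => ENNReal.ofReal (if 1 ≤ x then α * x ^ (-α - 1) else 0))

noncomputable def aSeq (α γ : ℝ) (n : ℕ) : ℝ := ((n : ℝ) ^ γ * Real.log n) ^ (1/α)

set_option linter.unusedVariables false

instance (α : ℝ) : SFinite (paretoMeasure α) :=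
  inferInstanceAs (SFinite (MeasureTheory.volume.withDensity
    (fun x => ENNReal.ofReal (if 1 ≤ x then α * x ^ (-α - 1) else 0))))

lemma pareto_meas (α : ℝ) :
    Measurable (fun x : ℝ => ENNReal.ofReal (if 1 ≤ x then α * x ^ (-α - 1) else 0)) := by
  apply Measurable.ennreal_ofReal
  have h : (fun x : ℝ => (if 1 ≤ x then α * x ^ (-α - 1) else 0))
      = fun x => if 1 ≤ x then α * Real.exp (Real.log x * (-α - 1)) else 0 := by
    funext x; split_ifs with h
    · rw [Real.rpow_def_of_pos (by linarith)]
    · rfl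
  rw [h]
  exact Measurable.ite measurableSet_Ici
    (measurable_const.mul (Real.measurable_exp.comp (Real.measurable_log.mul measurable_const)))
    measurable_const

lemma tail_integral (α : ℝ) (hα : 0 < α) {s : ℝ} (hs : 0 < s) :
    ∫ x in Ioi s, α * x ^ (-α - 1) = s ^ (-α) := by
  rw [integral_const_mul, integral_Ioi_rpow_of_lt (by linarith) hs,
    show -α - 1 + 1 = -α by ring]
  field_simp

lemma tail_integrable (α : ℝ) (hα : 0 < α) {s : ℝ} (hs : 0 < s) :
    IntegrableOn (fun x : ℝ => α * x ^ (-α - 1)) (Ioi s) :=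
  (integrableOn_Ioi_rpow_of_lt (by linarith) hs).const_mul α

lemma tail_lintegral (α : ℝ) (hα : 0 < α) {s : ℝ} (hs : 0 < s) :
    ∫⁻ x in Ioi s, ENNReal.ofReal (α * x ^ (-α - 1)) = ENNReal.ofReal (s ^ (-α)) := by
  rw [← ofReal_integral_eq_lintegral_ofReal (tail_integrable α hα hs)
    ((ae_restrict_iff' measurableSet_Ioi).2 (ae_of_all _ fun x hx =>
      mul_nonneg hα.le (Real.rpow_nonneg (by exact le_trans hs.le (le_of_lt hx)) _)))]
  rw [tail_integral α hα hs]

lemma pareto_Ioi (α : ℝ) (hα : 0 < α) {s : ℝ} (hs : 1 ≤ s) :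
    paretoMeasure α (Ioi s) = ENNReal.ofReal (s ^ (-α)) := by
  rw [paretoMeasure, withDensity_apply _ measurableSet_Ioi,
    setLIntegral_congr_fun measurableSet_Ioi (fun x (hx : x ∈ Ioi s) =>
      by rw [if_pos (hs.trans (le_of_lt hx))])]
  exact tail_lintegral α hα (lt_of_lt_of_le one_pos hs)

lemma pareto_Ioc_zero (α : ℝ) {s : ℝ} (hs : s < 1) :
    paretoMeasure α (Ioc s 1) = 0 := by
  rw [paretoMeasure, withDensity_apply _ measurableSet_Ioc,
    ← setLIntegral_congr (Ioo_ae_eq_Ioc (a := s) (b := 1)),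
    setLIntegral_congr_fun measurableSet_Ioo (fun x (hx : x ∈ Ioo s 1) =>
      by rw [if_neg (not_le.2 hx.2), ENNReal.ofReal_zero])]
  simp

lemma pareto_Ioi_lt (α : ℝ) (hα : 0 < α) {s : ℝ} (hs : s < 1) :
    paretoMeasure α (Ioi s) = 1 := by
  rw [← Ioc_union_Ioi_eq_Ioi hs.le,
    measure_union (Set.Ioc_disjoint_Ioi le_rfl) measurableSet_Ioi,
    pareto_Ioc_zero α hs, pareto_Ioi α hα le_rfl]
  simp

lemma pareto_univ (α : ℝ) (hα : 0 < α) : IsProbabilityMeasure (paretoMeasure α) := by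
  constructor
  have h : (univ : Set ℝ) = Iic 0 ∪ Ioi 0 := by simp
  rw [h, measure_union (Set.Iic_disjoint_Ioi le_rfl) measurableSet_Ioi,
    pareto_Ioi_lt α hα one_pos]
  have h2 : paretoMeasure α (Iic 0) = 0 := by
    rw [paretoMeasure, withDensity_apply _ measurableSet_Iic,
      setLIntegral_congr_fun measurableSet_Iic (fun (x : ℝ) (hx : x ∈ Iic 0) =>
        by rw [if_neg (by simp at hx; intro h; linarith), ENNReal.ofReal_zero])]
    simp
  rw [h2, zero_add]

lemma slice_eq {x t : ℝ} (hx : 0 < x) :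
    (Prod.mk x ⁻¹' {p : ℝ × ℝ | p.1 * p.2 > t}) = Ioi (t / x) := by
  ext y
  simp only [Set.mem_preimage, Set.mem_setOf_eq, Set.mem_Ioi, gt_iff_lt,
    div_lt_iff₀ hx]
  rw [mul_comm]

lemma pareto_prod (α : ℝ) (hα : 0 < α) {t : ℝ} (ht : 1 ≤ t) :
    ((paretoMeasure α).prod (paretoMeasure α)) {p : ℝ × ℝ | p.1 * p.2 > t}
      = ENNReal.ofReal (t ^ (-α) * (1 + α * Real.log t)) := by
  have htpos : (0:ℝ) < t := lt_of_lt_of_le one_pos ht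
  have hlog : 0 ≤ Real.log t := Real.log_nonneg ht
  have hS : MeasurableSet {p : ℝ × ℝ | p.1 * p.2 > t} :=
    measurableSet_lt measurable_const (measurable_fst.mul measurable_snd)
  rw [Measure.prod_apply hS]
  set f : ℝ → ENNReal := fun x => ENNReal.ofReal (if 1 ≤ x then α * x ^ (-α - 1) else 0)
    with hf
  set g : ℝ → ENNReal := fun x => paretoMeasure α (Prod.mk x ⁻¹' {p : ℝ × ℝ | p.1 * p.2 > t})
    with hg
  have hgm : Measurable g := measurable_measure_prodMk_left hS
  have hmeq : paretoMeasure α = MeasureTheory.volume.withDensity f := rfl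
  rw [hmeq, lintegral_withDensity_eq_lintegral_mul _ (pareto_meas α) hgm]
  rw [← lintegral_add_compl _ (measurableSet_Ici (a := (1:ℝ)))]
  have hcomp : ∫⁻ x in (Ici (1:ℝ))ᶜ, (f * g) x = 0 := by
    have hptw : ∀ x ∈ (Ici (1:ℝ))ᶜ, (f * g) x = 0 := by
      intro x hx
      have hx1 : ¬ (1 ≤ x) := hx
      show ENNReal.ofReal (if 1 ≤ x then α * x ^ (-α - 1) else 0) * g x = 0
      rw [if_neg hx1, ENNReal.ofReal_zero, zero_mul]
    rw [setLIntegral_congr_fun measurableSet_Ici.compl hptw]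
    simp
  rw [hcomp, add_zero, ← Icc_union_Ioi_eq_Ici ht,
    lintegral_union measurableSet_Ioi
      (Set.disjoint_left.mpr (fun a ha hb => (not_lt.2 ha.2) hb))]
  have hIcc : ∫⁻ x in Icc (1:ℝ) t, (f * g) x
      = ENNReal.ofReal (α * t ^ (-α) * Real.log t) := by
    have hptw : ∀ x ∈ Icc (1:ℝ) t, (f * g) x = ENNReal.ofReal (α * t ^ (-α) * x⁻¹) := by
      intro x hx
      obtain ⟨hx1, hxt⟩ := hx
      have hxpos : (0:ℝ) < x := lt_of_lt_of_le one_pos hx1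
      have hgx : g x = ENNReal.ofReal ((t / x) ^ (-α)) := by
        show paretoMeasure α (Prod.mk x ⁻¹' {p : ℝ × ℝ | p.1 * p.2 > t}) = _
        rw [slice_eq hxpos, pareto_Ioi α hα ((one_le_div hxpos).2 hxt)]
      show ENNReal.ofReal (if 1 ≤ x then α * x ^ (-α - 1) else 0) * g x = _
      rw [if_pos hx1, hgx,
        ← ENNReal.ofReal_mul (mul_nonneg hα.le (Real.rpow_nonneg hxpos.le _))]
      congr 1
      have e1 : (t / x) ^ (-α) = t ^ (-α) / x ^ (-α) := Real.div_rpow htpos.le hxpos.le (-α)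
      have e2 : x ^ (-α - 1) / x ^ (-α) = x⁻¹ := by
        rw [← Real.rpow_sub hxpos, show -α - 1 - (-α) = -1 by ring, Real.rpow_neg_one]
      calc α * x ^ (-α - 1) * (t / x) ^ (-α)
          = α * t ^ (-α) * (x ^ (-α - 1) / x ^ (-α)) := by rw [e1]; ring
        _ = α * t ^ (-α) * x⁻¹ := by rw [e2]
    rw [setLIntegral_congr_fun measurableSet_Icc hptw,
      setLIntegral_congr (Ioc_ae_eq_Icc (α := ℝ) (a := (1:ℝ)) (b := t)).symm]
    have hint : IntegrableOn (fun x : ℝ => α * t ^ (-α) * x⁻¹) (Ioc 1 t) := by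
      apply Integrable.const_mul
      apply ((continuousOn_inv₀.mono ?_).integrableOn_Icc).mono_set Ioc_subset_Icc_self
      intro x hx
      simp only [Set.mem_compl_iff, Set.mem_singleton_iff]
      intro h; rw [h] at hx; exact absurd hx.1 (by norm_num)
    rw [← ofReal_integral_eq_lintegral_ofReal hint
      ((ae_restrict_iff' measurableSet_Ioc).2 (ae_of_all _ fun x hx =>
        mul_nonneg (mul_nonneg hα.le (Real.rpow_nonneg htpos.le _))
          (inv_nonneg.2 (le_trans zero_le_one hx.1.le))))]
    congr 1
    rw [integral_const_mul, ← intervalIntegral.integral_of_le ht,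
      integral_inv_of_pos one_pos htpos, div_one]
  have hIoi : ∫⁻ x in Ioi t, (f * g) x = ENNReal.ofReal (t ^ (-α)) := by
    have hptw : ∀ x ∈ Ioi t, (f * g) x = ENNReal.ofReal (α * x ^ (-α - 1)) := by
      intro x hx
      have hxt : t < x := hx
      have hx1 : (1:ℝ) ≤ x := le_trans ht hxt.le
      have hxpos : (0:ℝ) < x := lt_of_lt_of_le one_pos hx1
      have hgx : g x = 1 := by
        show paretoMeasure α (Prod.mk x ⁻¹' {p : ℝ × ℝ | p.1 * p.2 > t}) = _
        rw [slice_eq hxpos, pareto_Ioi_lt α hα ((div_lt_one hxpos).2 hxt)]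
      show ENNReal.ofReal (if 1 ≤ x then α * x ^ (-α - 1) else 0) * g x = _
      rw [if_pos hx1, hgx, mul_one]
    rw [setLIntegral_congr_fun measurableSet_Ioi hptw]
    exact tail_lintegral α hα htpos
  rw [hIcc, hIoi,
    ← ENNReal.ofReal_add (mul_nonneg (mul_nonneg hα.le (Real.rpow_nonneg htpos.le _)) hlog)
      (Real.rpow_nonneg htpos.le _)]
  congr 1
  ring

theorem stmt6 (α γ : ℝ) (hα : 0 < α) (hγ : 0 < γ) :
    Tendsto (fun n : ℕ =>
      (n.choose 2 : ℝ) *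
        (((paretoMeasure α).prod (paretoMeasure α))
          {p : ℝ × ℝ | p.1 * p.2 > aSeq α γ n}).toReal
      / ((γ / 2) * (n : ℝ) ^ (2 - γ))) atTop (nhds 1) := by
  have hL : Tendsto (fun n : ℕ => Real.log n) atTop atTop :=
    Real.tendsto_log_atTop.comp tendsto_natCast_atTop_atTop
  -- limit of the closed form
  have h1 : Tendsto (fun n : ℕ => 1 - 1/(n:ℝ)) atTop (nhds 1) := by
    simpa using tendsto_const_nhds.sub (tendsto_one_div_atTop_nhds_zero_nat (𝕜 := ℝ))
  have h2a : Tendsto (fun n : ℕ => 1 / Real.log n) atTop (nhds 0) := by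
    have := tendsto_inv_atTop_zero.comp hL
    simp only [one_div]; exact this
  have h2b : Tendsto (fun n : ℕ => Real.log (Real.log n) / Real.log n) atTop (nhds 0) :=
    (Real.isLittleO_log_id_atTop.tendsto_div_nhds_zero).comp hL
  have h2 : Tendsto (fun n : ℕ =>
      (1 / Real.log n + γ + Real.log (Real.log n) / Real.log n) / γ) atTop (nhds 1) := by
    have h := ((h2a.add (tendsto_const_nhds (x := γ))).add h2b).div_const γ
    simpa [hγ.ne'] using h
  have hlim : Tendsto (fun n : ℕ => (1 - 1/(n:ℝ)) *
      ((1 / Real.log n + γ + Real.log (Real.log n) / Real.log n) / γ)) atTop (nhds 1) := by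
    simpa using h1.mul h2
  apply hlim.congr'
  rw [eventuallyEq_iff_exists_mem]
  refine ⟨Ici 3, Ici_mem_atTop 3, fun n hn => ?_⟩
  have hn3 : (3:ℕ) ≤ n := hn
  have hnR : (3:ℝ) ≤ (n:ℝ) := by exact_mod_cast hn3
  have hnpos : (0:ℝ) < n := by linarith
  have hn1 : (1:ℝ) < n := by linarith
  have hLn : 1 < Real.log n := by
    have : Real.log (Real.exp 1) < Real.log n :=
      Real.log_lt_log (Real.exp_pos 1) (lt_of_lt_of_le (by
        have := Real.exp_one_lt_d9; linarith) hnR)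
    simpa using this
  have hLpos : 0 < Real.log n := by linarith
  have hpow : (1:ℝ) ≤ (n:ℝ) ^ γ := Real.one_le_rpow hn1.le hγ.le
  have hpowpos : (0:ℝ) < (n:ℝ) ^ γ := Real.rpow_pos_of_pos hnpos γ
  set u : ℝ := (n:ℝ) ^ γ * Real.log n with hu
  have hu1 : (1:ℝ) ≤ u := by rw [hu]; nlinarith
  have hupos : (0:ℝ) < u := lt_of_lt_of_le one_pos hu1
  have ht1 : (1:ℝ) ≤ aSeq α γ n := Real.one_le_rpow hu1 (by positivity)
  -- value of the measure
  dsimp only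
  rw [pareto_prod α hα ht1]
  have htneg : (aSeq α γ n) ^ (-α) = u⁻¹ := by
    rw [aSeq, ← Real.rpow_mul hupos.le, show (1/α) * (-α) = -1 by field_simp,
      Real.rpow_neg_one]
  have htlog : α * Real.log (aSeq α γ n) = Real.log u := by
    rw [aSeq, Real.log_rpow hupos]; field_simp
  have hlogu : Real.log u = γ * Real.log n + Real.log (Real.log n) :=
    by rw [hu, Real.log_mul (ne_of_gt hpowpos) (ne_of_gt hLpos), Real.log_rpow hnpos]
  rw [ENNReal.toReal_ofReal (mul_nonneg (Real.rpow_nonneg (le_trans zero_le_one ht1) _)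
    (by nlinarith [mul_nonneg hα.le (Real.log_nonneg ht1)]))]
  rw [htneg, show (1 + α * Real.log (aSeq α γ n)) = 1 + Real.log u by rw [← htlog]]
  rw [hlogu]
  rw [Nat.cast_choose_two]
  have hn2 : (n:ℝ) ^ (2 - γ) * (n:ℝ) ^ γ = (n:ℝ) * n := by
    rw [← Real.rpow_add hnpos, show (2:ℝ) - γ + γ = ((2:ℕ):ℝ) by push_cast; ring,
      Real.rpow_natCast]
    ring
  have hne1 : ((n:ℝ)) ≠ 0 := ne_of_gt hnpos
  have hne2 : Real.log n ≠ 0 := ne_of_gt hLpos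
  have hne4 : (n:ℝ) ^ γ ≠ 0 := ne_of_gt hpowpos
  rw [show (n:ℝ) ^ (2 - γ) = (n:ℝ) * n / (n:ℝ) ^ γ from by rw [eq_div_iff hne4]; exact hn2]
  rw [hu]
  field_simp
  ring
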